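/- If I is a proper ideal of Lmc(S), then E(I) = {E_ε(f) : f ∈ I, ε > 0} is an e-filter: it is a z-filter satisfying E(E⁻(E(I))) = E(I). In particular ∅ ∉ E(I), E(I) is closed under finite intersections up to containing a member, and is upward closed in zero sets. -/

import Mathlib

open scoped BoundedContinuousFunction
open WeakDual

/-- A semitopological semigroup: multiplication is separately continuous. -/
class SemitopologicalSemigroup (S : Type*) [TopologicalSpace S] [Mul S] : Prop where
  continuous_mul_left : ∀ s : S, Continuous fun x : S => s * x
  continuous_mul_right : ∀ s : S, Continuous fun x : S => x * s

/-- Left translate `L_s f (x) = f (s x)` as a bounded continuous function. -/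
noncomputable def lTrans {S : Type*} [TopologicalSpace S] [Mul S] [SemitopologicalSemigroup S]
    (s : S) (f : S →ᵇ ℂ) : S →ᵇ ℂ :=
  f.compContinuous ⟨fun x => s * x, SemitopologicalSemigroup.continuous_mul_left s⟩

/-- The left multiplicatively continuous functions: `f ∈ Lmc S` iff `T_μ f` is (bounded)
continuous for every character `μ` of `CB(S) = S →ᵇ ℂ` (i.e. every `μ ∈ βS`). -/
def Lmc (S : Type*) [TopologicalSpace S] [Mul S] [SemitopologicalSemigroup S] :
    Set (S →ᵇ ℂ) :=
  {f | ∀ μ : characterSpace ℂ (S →ᵇ ℂ), Continuous fun s : S => (μ (lTrans s f) : ℂ)}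

/-- `E_ε(f) = {x ∈ S : |f x| ≤ ε}`. -/
def Eset {S : Type*} [TopologicalSpace S] (ε : ℝ) (f : S →ᵇ ℂ) : Set S :=
  {x : S | ‖f x‖ ≤ ε}

/-- A zero set of `Lmc S`: `Z(f) = f⁻¹({0})` for some `f ∈ Lmc S`. -/
def IsZeroSet {S : Type*} [TopologicalSpace S] [Mul S] [SemitopologicalSemigroup S]
    (A : Set S) : Prop :=
  ∃ f ∈ Lmc S, A = {x : S | f x = 0}

/-- `E(I) = {E_ε(f) : f ∈ I, ε > 0}`. -/
def Efam {S : Type*} [TopologicalSpace S] [Mul S] [SemitopologicalSemigroup S]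
    (I : Set (S →ᵇ ℂ)) : Set (Set S) :=
  {A | ∃ f ∈ I, ∃ ε : ℝ, 0 < ε ∧ A = Eset ε f}

/-- `E⁻(𝒜) = {f ∈ Lmc S : E_ε(f) ∈ 𝒜 for all ε > 0}`. -/
def Einv {S : Type*} [TopologicalSpace S] [Mul S] [SemitopologicalSemigroup S]
    (𝒜 : Set (Set S)) : Set (S →ᵇ ℂ) :=
  {f | f ∈ Lmc S ∧ ∀ ε : ℝ, 0 < ε → Eset ε f ∈ 𝒜}

/-- A `z`-filter on `Lmc S`. -/
structure IsZFilter {S : Type*} [TopologicalSpace S] [Mul S] [SemitopologicalSemigroup S]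
    (𝒜 : Set (Set S)) : Prop where
  zero_sets : ∀ A ∈ 𝒜, IsZeroSet A
  not_empty_mem : ∅ ∉ 𝒜
  univ_mem : Set.univ ∈ 𝒜
  inter_mem : ∀ A ∈ 𝒜, ∀ B ∈ 𝒜, A ∩ B ∈ 𝒜
  superset_mem : ∀ A ∈ 𝒜, ∀ B : Set S, IsZeroSet B → A ⊆ B → B ∈ 𝒜

/-- An ideal of the algebra `Lmc S`. -/
structure IsIdealLmc {S : Type*} [TopologicalSpace S] [Mul S] [SemitopologicalSemigroup S]
    (I : Set (S →ᵇ ℂ)) : Prop where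
  subset_lmc : I ⊆ Lmc S
  zero_mem : (0 : S →ᵇ ℂ) ∈ I
  add_mem : ∀ f ∈ I, ∀ g ∈ I, f + g ∈ I
  mul_mem : ∀ f ∈ Lmc S, ∀ g ∈ I, f * g ∈ I

/-- A maximal (proper) ideal of `Lmc S`. -/
def IsMaximalIdealLmc {S : Type*} [TopologicalSpace S] [Mul S] [SemitopologicalSemigroup S]
    (M : Set (S →ᵇ ℂ)) : Prop :=
  IsIdealLmc M ∧ M ≠ Lmc S ∧ ∀ J, IsIdealLmc J → J ≠ Lmc S → M ⊆ J → J = M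

/-- An `e`-filter: a `z`-filter with `E(E⁻(𝒜)) = 𝒜`. -/
def IsEFilter {S : Type*} [TopologicalSpace S] [Mul S] [SemitopologicalSemigroup S]
    (𝒜 : Set (Set S)) : Prop :=
  IsZFilter 𝒜 ∧ Efam (Einv 𝒜) = 𝒜

/-- An `e`-ideal: an ideal with `E⁻(E(I)) = I`. -/
def IsEIdeal {S : Type*} [TopologicalSpace S] [Mul S] [SemitopologicalSemigroup S]
    (I : Set (S →ᵇ ℂ)) : Prop :=
  IsIdealLmc I ∧ Einv (Efam I) = I

/-- An `e`-ultrafilter: a maximal `e`-filter. -/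
def IsEUltrafilter {S : Type*} [TopologicalSpace S] [Mul S] [SemitopologicalSemigroup S]
    (p : Set (Set S)) : Prop :=
  IsEFilter p ∧ ∀ q, IsEFilter q → p ⊆ q → q = p

/-- The sum `p + q` of two families of zero sets: `A ∈ p + q` iff `A = E_ε(f)` for some `ε > 0`,
`f ∈ Lmc S`, with `E_δ(q, f) = {x : λ_x⁻¹(E_δ(f)) ∈ q} ∈ p` for all `δ > 0`. -/
def eAdd {S : Type*} [TopologicalSpace S] [Mul S] [SemitopologicalSemigroup S]
    (p q : Set (Set S)) : Set (Set S) :=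
  {A | ∃ ε : ℝ, 0 < ε ∧ ∃ f ∈ Lmc S, A = Eset ε f ∧
    ∀ δ : ℝ, 0 < δ → {x : S | (fun t => x * t) ⁻¹' Eset δ f ∈ q} ∈ p}

/-- The principal `e`-ultrafilter `e(a) = {E_ε(f) : f ∈ Lmc S, f a = 0, ε > 0}`. -/
def ePrinc {S : Type*} [TopologicalSpace S] [Mul S] [SemitopologicalSemigroup S]
    (a : S) : Set (Set S) :=
  {A | ∃ f ∈ Lmc S, f a = 0 ∧ ∃ ε : ℝ, 0 < ε ∧ A = Eset ε f}

section aux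
variable {S : Type*} [TopologicalSpace S] [Mul S] [SemitopologicalSemigroup S]

@[simp] lemma lTrans_apply (s : S) (f : S →ᵇ ℂ) (x : S) : lTrans s f x = f (s * x) := rfl

lemma lTrans_add (s : S) (f g : S →ᵇ ℂ) : lTrans s (f + g) = lTrans s f + lTrans s g := by
  ext x; simp

lemma lTrans_mul (s : S) (f g : S →ᵇ ℂ) : lTrans s (f * g) = lTrans s f * lTrans s g := by
  ext x; simp

lemma lTrans_star (s : S) (f : S →ᵇ ℂ) : lTrans s (star f) = star (lTrans s f) := by
  ext x; simp

lemma lTrans_smul (s : S) (c : ℂ) (f : S →ᵇ ℂ) : lTrans s (c • f) = c • lTrans s f := by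
  ext x; simp

lemma lTrans_one (s : S) : lTrans s (1 : S →ᵇ ℂ) = 1 := by
  ext x; simp

lemma lTrans_norm_le (s : S) (f : S →ᵇ ℂ) : ‖lTrans s f‖ ≤ ‖f‖ :=
  BoundedContinuousFunction.norm_compContinuous_le f _

lemma lmc_add {f g : S →ᵇ ℂ} (hf : f ∈ Lmc S) (hg : g ∈ Lmc S) : f + g ∈ Lmc S := by
  intro μ
  simpa [lTrans_add, map_add] using (show Continuous fun s => μ (lTrans s f) + μ (lTrans s g) from (hf μ).add (hg μ))

lemma lmc_mul {f g : S →ᵇ ℂ} (hf : f ∈ Lmc S) (hg : g ∈ Lmc S) : f * g ∈ Lmc S := by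
  intro μ
  simpa [lTrans_mul, map_mul] using (show Continuous fun s => μ (lTrans s f) * μ (lTrans s g) from (hf μ).mul (hg μ))

lemma lmc_star {f : S →ᵇ ℂ} (hf : f ∈ Lmc S) : star f ∈ Lmc S := by
  intro μ
  simpa [lTrans_star, map_star] using (show Continuous fun s => (starRingEnd ℂ) (μ (lTrans s f)) from Complex.continuous_conj.comp (hf μ))

lemma lmc_smul (c : ℂ) {f : S →ᵇ ℂ} (hf : f ∈ Lmc S) : c • f ∈ Lmc S := by
  intro μ
  simpa [lTrans_smul, map_smul] using (show Continuous fun s => c * μ (lTrans s f) from continuous_const.mul (hf μ))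

lemma lmc_one : (1 : S →ᵇ ℂ) ∈ Lmc S := by
  intro μ
  simpa [lTrans_one, map_one] using (continuous_const : Continuous fun _ : S => (1 : ℂ))

lemma lmc_algebraMap (c : ℂ) : algebraMap ℂ (S →ᵇ ℂ) c ∈ Lmc S := by
  have : algebraMap ℂ (S →ᵇ ℂ) c = c • (1 : S →ᵇ ℂ) := by
    rw [Algebra.algebraMap_eq_smul_one]
  rw [this]
  exact lmc_smul c lmc_one

lemma lmc_zero : (0 : S →ᵇ ℂ) ∈ Lmc S := by
  intro μ
  have : ∀ s : S, lTrans s (0 : S →ᵇ ℂ) = 0 := fun s => by ext x; simp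
  simpa [this, map_zero] using (continuous_const : Continuous fun _ : S => (0 : ℂ))

lemma lTrans_sub (s : S) (f g : S →ᵇ ℂ) : lTrans s (f - g) = lTrans s f - lTrans s g := by
  ext x; simp

set_option synthInstance.maxHeartbeats 1000000 in
lemma lmc_isClosed [Nonempty S] : IsClosed (Lmc S) := by
  rw [← isSeqClosed_iff_isClosed]
  intro u f hu hf μ
  have hnorm : ∀ a : S →ᵇ ℂ, ‖μ a‖ ≤ ‖a‖ := fun a =>
    spectrum.norm_le_norm_of_mem (WeakDual.CharacterSpace.apply_mem_spectrum μ a)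
  have : TendstoUniformly (fun n s => (μ (lTrans s (u n)) : ℂ))
      (fun s => (μ (lTrans s f) : ℂ)) Filter.atTop := by
    rw [Metric.tendstoUniformly_iff]
    intro ε hε
    have := Metric.tendsto_atTop.mp hf (ε/2) (by linarith)
    obtain ⟨N, hN⟩ := this
    refine Filter.eventually_atTop.mpr ⟨N, fun n hn s => ?_⟩
    calc dist (μ (lTrans s f)) (μ (lTrans s (u n)))
        = ‖μ (lTrans s (f - u n))‖ := by rw [dist_eq_norm, ← map_sub, ← lTrans_sub]
      _ ≤ ‖lTrans s (f - u n)‖ := hnorm _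
      _ ≤ ‖f - u n‖ := lTrans_norm_le s _
      _ = dist (u n) f := by rw [dist_eq_norm, norm_sub_rev]
      _ < ε := lt_of_lt_of_le (hN n hn) (by linarith)
  exact this.continuous (Filter.Eventually.of_forall fun n => hu n μ).frequently

/-- `Lmc S` as a star subalgebra. -/
noncomputable def lmcSA : StarSubalgebra ℂ (S →ᵇ ℂ) where
  carrier := Lmc S
  mul_mem' := lmc_mul
  one_mem' := lmc_one
  add_mem' := lmc_add
  algebraMap_mem' := lmc_algebraMap
  star_mem' := lmc_star

end aux

section compgen
variable {S : Type*} [TopologicalSpace S] [Nonempty S]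

/-- The precomposition star algebra homomorphism `C(K, ℂ) → (S →ᵇ ℂ)` for `K` compact. -/
noncomputable def bcfComp (K : Set ℂ) [CompactSpace K] (f' : C(S, K)) :
    C(K, ℂ) →⋆ₐ[ℂ] (S →ᵇ ℂ) where
  toFun ψ := BoundedContinuousFunction.ofNormedAddCommGroup (fun x => ψ (f' x))
    (ψ.continuous.comp f'.continuous) ‖ψ‖ (fun x => ψ.norm_coe_le_norm (f' x))
  map_one' := by ext x; simp
  map_mul' ψ₁ ψ₂ := by ext x; simp
  map_zero' := by ext x; simp
  map_add' ψ₁ ψ₂ := by ext x; simp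
  commutes' c := by ext x; simp [Algebra.algebraMap_eq_smul_one]
  map_star' ψ := by ext x; simp

@[simp] lemma bcfComp_apply (K : Set ℂ) [CompactSpace K] (f' : C(S, K)) (ψ : C(K, ℂ)) (x : S) :
    bcfComp K f' ψ x = ψ (f' x) := rfl

lemma bcfComp_continuous (K : Set ℂ) [CompactSpace K] (f' : C(S, K)) :
    Continuous (bcfComp K f') := by
  refine AddMonoidHomClass.continuous_of_bound (bcfComp K f') 1 fun ψ => ?_
  rw [one_mul]
  exact (BoundedContinuousFunction.norm_le (norm_nonneg ψ)).2 fun x => ψ.norm_coe_le_norm (f' x)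

end compgen

section comp2
variable {S : Type*} [TopologicalSpace S] [Mul S] [SemitopologicalSemigroup S] [Nonempty S]

lemma lmc_comp {f : S →ᵇ ℂ} (hf : f ∈ Lmc S) {φ : ℂ → ℂ} (hφ : Continuous φ) :
    ∃ g ∈ Lmc S, ∀ x, g x = φ (f x) := by
  set K : Set ℂ := Metric.closedBall 0 ‖f‖ with hK
  haveI : CompactSpace K := isCompact_iff_compactSpace.mp (isCompact_closedBall _ _)
  have hmem : ∀ x : S, f x ∈ K := fun x => by
    simpa [K, Metric.mem_closedBall, dist_zero_right] using f.norm_coe_le_norm x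
  let f' : C(S, K) := ⟨fun x => ⟨f x, hmem x⟩, f.continuous.subtype_mk hmem⟩
  let Ψ := bcfComp (S := S) K f'
  let T : StarSubalgebra ℂ C(K, ℂ) := StarSubalgebra.comap Ψ lmcSA
  have hT_closed : IsClosed (T : Set C(K, ℂ)) := by
    have h : (T : Set C(K, ℂ)) = Ψ ⁻¹' (Lmc S) := rfl
    rw [h]
    exact (lmc_isClosed (S := S)).preimage (bcfComp_continuous K f')
  have hX : Ψ (Polynomial.toContinuousMapOnAlgHom K Polynomial.X) = f := by
    ext x; simp [Ψ, f']
  have h1 : (polynomialFunctions K).starClosure ≤ T := by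
    rw [Subalgebra.starClosure_le_iff, polynomialFunctions.eq_adjoin_X, Algebra.adjoin_le_iff]
    rintro ψ hψ
    rw [Set.mem_singleton_iff] at hψ; subst hψ
    show Ψ _ ∈ Lmc S
    rw [hX]; exact hf
  have h2 : (⊤ : StarSubalgebra ℂ C(K, ℂ)) ≤ T := by
    rw [← polynomialFunctions.starClosure_topologicalClosure K]
    exact StarSubalgebra.topologicalClosure_minimal h1 hT_closed
  exact ⟨Ψ (ContinuousMap.restrict K ⟨φ, hφ⟩), h2 (by trivial), fun x => rfl⟩

end comp2

section helpers
variable {S : Type*} [TopologicalSpace S] [Mul S] [SemitopologicalSemigroup S]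

lemma conj_mul_self' (z : ℂ) : (starRingEnd ℂ) z * z = ((‖z‖^2 : ℝ) : ℂ) := by
  rw [mul_comm, Complex.mul_conj]
  norm_cast
  rw [Complex.sq_norm]

lemma star_mul_self_bcf (z : ℂ) : star z * z = ((‖z‖^2 : ℝ) : ℂ) := conj_mul_self' z

end helpers

example (z : ℂ) : star z * z = ((‖z‖^2 : ℝ) : ℂ) := star_mul_self_bcf z

section main
variable {S : Type*} [TopologicalSpace S] [Mul S] [SemitopologicalSemigroup S] [Nonempty S]
variable {I : Set (S →ᵇ ℂ)}

lemma efam_zero_sets (hI : IsIdealLmc I) : ∀ A ∈ Efam I, IsZeroSet A := by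
  rintro A ⟨f, hfI, ε, hε, rfl⟩
  have hφ : Continuous fun z : ℂ => ((max (‖z‖^2 - ε^2) 0 : ℝ) : ℂ) :=
    Complex.continuous_ofReal.comp (((continuous_norm.pow 2).sub continuous_const).max
      continuous_const)
  obtain ⟨g, hgL, hgx⟩ := lmc_comp (hI.subset_lmc hfI) hφ
  refine ⟨g, hgL, ?_⟩
  ext x
  simp only [Eset, Set.mem_setOf_eq, hgx, Complex.ofReal_eq_zero]
  rw [max_eq_right_iff]
  constructor
  · intro h; nlinarith [norm_nonneg (f x)]
  · intro h; nlinarith [norm_nonneg (f x)]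

lemma efam_not_empty (hI : IsIdealLmc I) (hproper : I ≠ Lmc S) : ∅ ∉ Efam I := by
  rintro ⟨f, hfI, ε, hε, hE⟩
  have hbig : ∀ x : S, ε < ‖f x‖ := by
    intro x
    by_contra h
    push_neg at h
    have : x ∈ Eset ε f := h
    rw [← hE] at this
    exact this
  have hφ : Continuous fun z : ℂ => (starRingEnd ℂ) z / ((max (ε^2) (‖z‖^2) : ℝ) : ℂ) := by
    apply Continuous.div
    · exact Complex.continuous_conj
    · exact Complex.continuous_ofReal.comp (continuous_const.max (continuous_norm.pow 2))
    · intro z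
      rw [ne_eq, Complex.ofReal_eq_zero]
      have : (0:ℝ) < max (ε^2) (‖z‖^2) := lt_of_lt_of_le (pow_pos hε 2) (le_max_left _ _)
      exact ne_of_gt this
  obtain ⟨g, hgL, hgx⟩ := lmc_comp (hI.subset_lmc hfI) hφ
  have hone : g * f = 1 := by
    ext x
    have hx := hbig x
    have hfx : f x ≠ 0 := by
      intro h0; rw [h0, norm_zero] at hx; linarith
    have hmax : max (ε^2) (‖f x‖^2) = ‖f x‖^2 := max_eq_right (by nlinarith [norm_nonneg (f x)])
    simp only [BoundedContinuousFunction.mul_apply, BoundedContinuousFunction.coe_one, Pi.one_apply, hgx, hmax]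
    rw [div_mul_eq_mul_div, conj_mul_self']
    exact div_self (by simpa [Complex.ofReal_eq_zero] using (by nlinarith : (0:ℝ) < ‖f x‖^2).ne')
  apply hproper
  apply Set.Subset.antisymm hI.subset_lmc
  intro u hu
  have h1 : (1 : S →ᵇ ℂ) ∈ I := hone ▸ hI.mul_mem g hgL f hfI
  have := hI.mul_mem u hu 1 h1
  rwa [mul_one] at this

lemma efam_univ (hI : IsIdealLmc I) : Set.univ ∈ Efam I :=
  ⟨0, hI.zero_mem, 1, one_pos, by ext x; simp [Eset]⟩

lemma efam_superset (hI : IsIdealLmc I) : ∀ A ∈ Efam I, ∀ B : Set S, IsZeroSet B → A ⊆ B → B ∈ Efam I := by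
  rintro A ⟨f, hfI, γ, hγ, rfl⟩ B ⟨g, hgL, rfl⟩ hAB
  have hfL := hI.subset_lmc hfI
  -- u x = 1 + ‖g x‖
  obtain ⟨u, huL, hux⟩ := lmc_comp hgL
    (show Continuous fun z : ℂ => ((1 + ‖z‖ : ℝ) : ℂ) from
      Complex.continuous_ofReal.comp (continuous_const.add continuous_norm))
  -- v x = conj (f x) / max γ² ‖f x‖²
  have hφv : Continuous fun z : ℂ => (starRingEnd ℂ) z / ((max (γ^2) (‖z‖^2) : ℝ) : ℂ) := by
    apply Continuous.div
    · exact Complex.continuous_conj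
    · exact Complex.continuous_ofReal.comp (continuous_const.max (continuous_norm.pow 2))
    · intro z
      rw [ne_eq, Complex.ofReal_eq_zero]
      exact ne_of_gt (lt_of_lt_of_le (pow_pos hγ 2) (le_max_left _ _))
  obtain ⟨v, hvL, hvx⟩ := lmc_comp hfL hφv
  refine ⟨(u * v) * f, hI.mul_mem (u * v) (lmc_mul huL hvL) f hfI, 1, one_pos, ?_⟩
  have hval : ∀ x : S, ‖((u * v) * f) x‖ = (1 + ‖g x‖) * (‖f x‖^2 / max (γ^2) (‖f x‖^2)) := by
    intro x
    have : ((u * v) * f) x = (((1 + ‖g x‖) * (‖f x‖^2 / max (γ^2) (‖f x‖^2)) : ℝ) : ℂ) := by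
      simp only [BoundedContinuousFunction.mul_apply, hux, hvx]
      rw [mul_assoc, div_mul_eq_mul_div, conj_mul_self']
      push_cast
      ring
    rw [this, Complex.norm_real, Real.norm_eq_abs, abs_of_nonneg]
    have hmaxpos : (0:ℝ) < max (γ^2) (‖f x‖^2) := lt_of_lt_of_le (pow_pos hγ 2) (le_max_left _ _)
    positivity
  ext x
  simp only [Eset, Set.mem_setOf_eq, hval]
  constructor
  · intro hg0
    rw [hg0, norm_zero, add_zero, one_mul]
    exact div_le_one_of_le₀ (le_max_right _ _) (le_of_lt (lt_of_lt_of_le (pow_pos hγ 2) (le_max_left _ _)))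
  · intro hle
    by_contra hg0
    have hgx : 0 < ‖g x‖ := norm_pos_iff.mpr hg0
    have hxA : x ∉ Eset γ f := fun hx => hg0 (hAB hx)
    have hfx : γ < ‖f x‖ := by
      simp only [Eset, Set.mem_setOf_eq, not_le] at hxA
      exact hxA
    have h2 : γ^2 < ‖f x‖^2 := by nlinarith
    rw [max_eq_right h2.le, div_self (by nlinarith : (‖f x‖^2 : ℝ) ≠ 0), mul_one] at hle
    linarith

lemma efam_inter (hI : IsIdealLmc I) : ∀ A ∈ Efam I, ∀ B ∈ Efam I, A ∩ B ∈ Efam I := by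
  rintro A ⟨f, hfI, γ, hγ, rfl⟩ B ⟨g, hgI, δ, hδ, rfl⟩
  have hfL := hI.subset_lmc hfI
  have hgL := hI.subset_lmc hgI
  set c2 : ℝ := min (γ^2) (δ^2) with hc2def
  have hc2 : 0 < c2 := lt_min (pow_pos hγ 2) (pow_pos hδ 2)
  -- m1 x = max (‖f x‖²/γ² - 1) 0, m2 similarly
  obtain ⟨m1, hm1L, hm1x⟩ := lmc_comp hfL
    (show Continuous fun z : ℂ => ((max (‖z‖^2/γ^2 - 1) 0 : ℝ) : ℂ) from
      Complex.continuous_ofReal.comp ((((continuous_norm.pow 2).div_const _).sub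
        continuous_const).max continuous_const))
  obtain ⟨m2, hm2L, hm2x⟩ := lmc_comp hgL
    (show Continuous fun z : ℂ => ((max (‖z‖^2/δ^2 - 1) 0 : ℝ) : ℂ) from
      Complex.continuous_ofReal.comp ((((continuous_norm.pow 2).div_const _).sub
        continuous_const).max continuous_const))
  set k : S →ᵇ ℂ := f * star f + g * star g with hkdef
  have hkL : k ∈ Lmc S := lmc_add (lmc_mul hfL (lmc_star hfL)) (lmc_mul hgL (lmc_star hgL))
  have hkx : ∀ x : S, k x = ((‖f x‖^2 + ‖g x‖^2 : ℝ) : ℂ) := by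
    intro x
    simp only [hkdef, BoundedContinuousFunction.add_apply, BoundedContinuousFunction.mul_apply,
      BoundedContinuousFunction.star_apply]
    rw [show star (f x) = (starRingEnd ℂ) (f x) from rfl,
      show star (g x) = (starRingEnd ℂ) (g x) from rfl,
      mul_comm (f x), mul_comm (g x), conj_mul_self', conj_mul_self']
    push_cast
    ring
  have hknorm : ∀ x : S, ‖k x‖ = ‖f x‖^2 + ‖g x‖^2 := by
    intro x
    rw [hkx x, Complex.norm_real, Real.norm_eq_abs, abs_of_nonneg (by positivity)]
  obtain ⟨σ, hσL, hσx⟩ := lmc_comp hkL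
    (show Continuous fun z : ℂ => ((1 / max c2 ‖z‖ : ℝ) : ℂ) by
      apply Complex.continuous_ofReal.comp
      apply Continuous.div continuous_const (continuous_const.max continuous_norm)
      intro z; exact ne_of_gt (lt_of_lt_of_le hc2 (le_max_left _ _)))
  set c : S →ᵇ ℂ := (1 + m1 + m2) * σ with hcdef
  have hcL : c ∈ Lmc S := lmc_mul (lmc_add (lmc_add lmc_one hm1L) hm2L) hσL
  set h : S →ᵇ ℂ := (c * star f) * f + (c * star g) * g with hhdef
  have hhI : h ∈ I := hI.add_mem _ (hI.mul_mem _ (lmc_mul hcL (lmc_star hfL)) f hfI) _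
    (hI.mul_mem _ (lmc_mul hcL (lmc_star hgL)) g hgI)
  refine ⟨h, hhI, 1, one_pos, ?_⟩
  have hval : ∀ x : S, ‖h x‖ = (1 + (max (‖f x‖^2/γ^2 - 1) 0 + max (‖g x‖^2/δ^2 - 1) 0)) *
      ((‖f x‖^2 + ‖g x‖^2) / max c2 (‖f x‖^2 + ‖g x‖^2)) := by
    intro x
    have hmaxpos : (0:ℝ) < max c2 (‖f x‖^2 + ‖g x‖^2) := lt_of_lt_of_le hc2 (le_max_left _ _)
    have hval0 : h x = (((1 + (max (‖f x‖^2/γ^2 - 1) 0 + max (‖g x‖^2/δ^2 - 1) 0)) *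
        ((‖f x‖^2 + ‖g x‖^2) / max c2 (‖f x‖^2 + ‖g x‖^2)) : ℝ) : ℂ) := by
      simp only [hhdef, hcdef, BoundedContinuousFunction.add_apply,
        BoundedContinuousFunction.mul_apply, BoundedContinuousFunction.coe_one, Pi.one_apply,
        BoundedContinuousFunction.star_apply, hm1x, hm2x, hσx, hknorm x]
      rw [show star (f x) = (starRingEnd ℂ) (f x) from rfl,
        show star (g x) = (starRingEnd ℂ) (g x) from rfl]
      rw [mul_assoc _ _ (f x), mul_assoc _ _ (g x), conj_mul_self', conj_mul_self']
      push_cast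
      ring
    rw [hval0, Complex.norm_real, Real.norm_eq_abs, abs_of_nonneg]
    have hM1 : (0:ℝ) ≤ max (‖f x‖^2/γ^2 - 1) 0 := le_max_right _ _
    have hM2 : (0:ℝ) ≤ max (‖g x‖^2/δ^2 - 1) 0 := le_max_right _ _
    positivity
  ext x
  simp only [Set.mem_inter_iff, Eset, Set.mem_setOf_eq, hval]
  rw [Iff.comm]
  constructor
  · intro hle
    by_contra hcon
    rw [not_and_or] at hcon
    have hM1 : max (‖f x‖^2/γ^2 - 1) 0 ≥ 0 := le_max_right _ _
    have hM2 : max (‖g x‖^2/δ^2 - 1) 0 ≥ 0 := le_max_right _ _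
    rcases hcon with hcf | hcg
    · push_neg at hcf
      have hF : γ^2 < ‖f x‖^2 := by nlinarith [norm_nonneg (f x)]
      have hsum : c2 ≤ ‖f x‖^2 + ‖g x‖^2 := by
        have := min_le_left (γ^2) (δ^2)
        nlinarith [norm_nonneg (g x), sq_nonneg (‖g x‖)]
      rw [max_eq_right hsum, div_self (by nlinarith [norm_nonneg (g x), sq_nonneg (‖g x‖)] : (‖f x‖^2 + ‖g x‖^2) ≠ 0)] at hle
      have hgt : (1:ℝ) < ‖f x‖^2/γ^2 := (one_lt_div (by positivity)).2 hF
      have : max (‖f x‖^2/γ^2 - 1) 0 ≥ ‖f x‖^2/γ^2 - 1 := le_max_left _ _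
      nlinarith
    · push_neg at hcg
      have hG : δ^2 < ‖g x‖^2 := by nlinarith [norm_nonneg (g x)]
      have hsum : c2 ≤ ‖f x‖^2 + ‖g x‖^2 := by
        have := min_le_right (γ^2) (δ^2)
        nlinarith [norm_nonneg (f x), sq_nonneg (‖f x‖)]
      rw [max_eq_right hsum, div_self (by nlinarith [norm_nonneg (f x), sq_nonneg (‖f x‖)] : (‖f x‖^2 + ‖g x‖^2) ≠ 0)] at hle
      have hgt : (1:ℝ) < ‖g x‖^2/δ^2 := (one_lt_div (by positivity)).2 hG
      have : max (‖g x‖^2/δ^2 - 1) 0 ≥ ‖g x‖^2/δ^2 - 1 := le_max_left _ _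
      nlinarith
  · rintro ⟨h1, h2⟩
    have hF : ‖f x‖^2 ≤ γ^2 := by nlinarith [norm_nonneg (f x)]
    have hG : ‖g x‖^2 ≤ δ^2 := by nlinarith [norm_nonneg (g x)]
    rw [max_eq_right (by rw [sub_nonpos, div_le_one (by positivity : (0:ℝ) < γ^2)]; exact hF),
      max_eq_right (by rw [sub_nonpos, div_le_one (by positivity : (0:ℝ) < δ^2)]; exact hG)]
    have hdiv : (‖f x‖^2 + ‖g x‖^2) / max c2 (‖f x‖^2 + ‖g x‖^2) ≤ 1 :=
      div_le_one_of_le₀ (le_max_right _ _) (le_of_lt (lt_of_lt_of_le hc2 (le_max_left _ _)))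
    have hdivnn : (0:ℝ) ≤ (‖f x‖^2 + ‖g x‖^2) / max c2 (‖f x‖^2 + ‖g x‖^2) := by positivity
    nlinarith

end main


theorem stmt9 {S : Type*} [TopologicalSpace S] [T2Space S] [Semigroup S]
    [SemitopologicalSemigroup S] (I : Set (S →ᵇ ℂ)) (hI : IsIdealLmc I)
    (hproper : I ≠ Lmc S) :
    IsEFilter (Efam I) := by
  cases isEmpty_or_nonempty S with
  | inl hS =>
    exfalso
    apply hproper
    haveI : Subsingleton (S →ᵇ ℂ) := ⟨fun f g => by ext x; exact hS.elim x⟩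
    ext f
    constructor
    · intro hf; exact hI.subset_lmc hf
    · intro _
      rw [Subsingleton.elim f (0 : S →ᵇ ℂ)]
      exact hI.zero_mem
  | inr hS =>
    refine ⟨⟨efam_zero_sets hI, efam_not_empty hI hproper, efam_univ hI, efam_inter hI,
      efam_superset hI⟩, ?_⟩
    ext A
    constructor
    · rintro ⟨f, ⟨hfL, hf⟩, ε, hε, rfl⟩
      exact hf ε hε
    · rintro ⟨f, hfI, ε, hε, rfl⟩
      exact ⟨f, ⟨hI.subset_lmc hfI, fun δ hδ => ⟨f, hfI, δ, hδ, rfl⟩⟩, ε, hε, rfl⟩
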